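/- Let |A| ≥ 2 and NC_I ⊆ A^I be the set of non-constant sequences, with |I| ≥ 2. A simplicial complex over I generates NC_I if and only if it is connected; the minimal generating complexes are the spanning trees of I. -/

import Mathlib

/-- `W` determines output coordinate `i` of `f`: the value `f x i` only
depends on the restriction of `x` to `W`. -/
def Determines {B J A I : Type*} (f : (J → B) → (I → A)) (i : I) (W : Set J) : Prop :=
  ∀ x y : J → B, (∀ j ∈ W, x j = y j) → f x i = f y i

/-- The input window of output coordinate `i`: the intersection of all
determining sets (which, for finite data, is the smallest determining set). -/
def window {B J A I : Type*} (f : (J → B) → (I → A)) (i : I) : Set J :=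
  ⋂₀ {W : Set J | Determines f i W}

/-- The dual window of an input coordinate `j`. -/
def dualWindow {B J A I : Type*} (f : (J → B) → (I → A)) (j : J) : Set I :=
  {i : I | j ∈ window f i}

/-- The communication complex of `f`: `S ∈ K_f` iff `⋂_{i ∈ S} W_f(i) ≠ ∅`
(the empty intersection being all of `J`). -/
def commComplex {B J A I : Type*} (f : (J → B) → (I → A)) : Set (Set I) :=
  {S : Set I | (⋂ i ∈ S, window f i).Nonempty}

/-- A complex `K` over `I` generates the language `L ⊆ A^I` if some function
`f : B^J → A^I` (with `B, J` finite, `J` nonempty) has image `L` and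
communication complex contained in `K`. -/
def Generates {A I : Type*} (K : Set (Set I)) (L : Set (I → A)) : Prop :=
  ∃ (B J : Type) (_ : Finite B) (_ : Finite J) (_ : Nonempty J)
    (f : (J → B) → (I → A)), Set.range f = L ∧ commComplex f ⊆ K

/-- A complex is connected if no nontrivial partition of the vertex set splits
all of its simplices. -/
def ConnectedComplex {I : Type*} (K : Set (Set I)) : Prop :=
  ¬ ∃ I0 : Set I, I0 ≠ ∅ ∧ I0 ≠ Set.univ ∧ ∀ S ∈ K, S ⊆ I0 ∨ S ⊆ I0ᶜ

/-- A simplicial complex: a downward closed collection of subsets. -/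
def IsComplex {I : Type*} (K : Set (Set I)) : Prop :=
  ∀ S ∈ K, ∀ T ⊆ S, T ∈ K

/-- The 1-skeleton of a complex, as a simple graph. -/
def skeletonGraph {I : Type*} (K : Set (Set I)) : SimpleGraph I :=
  SimpleGraph.fromRel (fun i j => ({i, j} : Set I) ∈ K)

/-- The complex associated to a graph: the empty set, the singletons, and the
edges. -/
def treeComplex {I : Type*} (G : SimpleGraph I) : Set (Set I) :=
  {S | S = ∅ ∨ (∃ i, S = {i}) ∨ ∃ i j, G.Adj i j ∧ S = ({i, j} : Set I)}

/-- The maximal simplices of a complex. -/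
def maxSimplices {I : Type*} (K : Set (Set I)) : Set (Set I) :=
  {S | S ∈ K ∧ ∀ T ∈ K, S ⊆ T → S = T}

/-- The image `f_*(K)` of a complex `K` on the input coordinates of `f`:
generated by the unions of dual windows over simplices of `K`. -/
def pushComplex {B J A I : Type*} (f : (J → B) → (I → A)) (K : Set (Set J)) : Set (Set I) :=
  {T : Set I | ∃ S ∈ K, T ⊆ ⋃ j ∈ S, dualWindow f j}

/-! ### Window lemmas -/

section Window

variable {B J A I : Type*}

lemma determines_univ (f : (J → B) → (I → A)) (i : I) : Determines f i Set.univ := by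
  intro x y h
  have : x = y := funext fun j => h j trivial
  rw [this]

lemma determines_inter {f : (J → B) → (I → A)} {i : I} {W1 W2 : Set J}
    (h1 : Determines f i W1) (h2 : Determines f i W2) : Determines f i (W1 ∩ W2) := by
  classical
  intro x y hxy
  have hz : f x i = f (fun j => if j ∈ W1 then x j else y j) i := by
    apply h1
    intro j hj
    simp [hj]
  rw [hz]
  apply h2
  intro j hj
  by_cases hj1 : j ∈ W1
  · simp only [if_pos hj1]
    exact hxy j ⟨hj1, hj⟩
  · simp [hj1]

lemma determines_sInter {f : (J → B) → (I → A)} {i : I} (D : Set (Set J)) (hD : D.Finite)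
    (h : ∀ W ∈ D, Determines f i W) : Determines f i (⋂₀ D) := by
  refine Set.Finite.induction_on
    (motive := fun D _ => (∀ W ∈ D, Determines f i W) → Determines f i (⋂₀ D)) D hD
    (fun _ => by simpa using determines_univ f i) ?_ h
  intro W D _ _ ih h
  rw [Set.sInter_insert]
  exact determines_inter (h W (Set.mem_insert _ _))
    (ih fun W' hW' => h W' (Set.mem_insert_of_mem _ hW'))

lemma window_determines [Finite J] (f : (J → B) → (I → A)) (i : I) :
    Determines f i (window f i) :=
  determines_sInter _ (Set.toFinite _) fun _ hW => hW

lemma window_subset {f : (J → B) → (I → A)} {i : I} {W : Set J} (h : Determines f i W) :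
    window f i ⊆ W :=
  Set.sInter_subset_of_mem h

lemma window_nonempty {A I B J : Type*} [Finite A] [Finite I] [Finite J]
    (hA : 2 ≤ Nat.card A) (hI : 2 ≤ Nat.card I) (f : (J → B) → (I → A))
    (hrange : Set.range f = {x : I → A | ∃ i j, x i ≠ x j}) (i : I) :
    (window f i).Nonempty := by
  classical
  rw [Set.nonempty_iff_ne_empty]
  intro hw
  have hdet : Determines f i ∅ := hw ▸ window_determines f i
  have hAnt : Nontrivial A := (Finite.one_lt_card_iff_nontrivial (α := A)).mp (by omega)
  have hInt : Nontrivial I := (Finite.one_lt_card_iff_nontrivial (α := I)).mp (by omega)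
  obtain ⟨a0, a1, h01⟩ := exists_pair_ne A
  obtain ⟨j0, hj0⟩ := exists_ne i
  have hz1 : (fun k => if k = i then a0 else a1) ∈ {x : I → A | ∃ i j, x i ≠ x j} :=
    ⟨i, j0, by simp [hj0, h01]⟩
  have hz2 : (fun k => if k = i then a1 else a0) ∈ {x : I → A | ∃ i j, x i ≠ x j} :=
    ⟨i, j0, by simp [hj0, h01.symm]⟩
  rw [← hrange] at hz1 hz2
  obtain ⟨x1, hx1⟩ := hz1
  obtain ⟨x2, hx2⟩ := hz2
  have := hdet x1 x2 (by intro j hj; cases hj)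
  rw [hx1, hx2] at this
  simp at this
  exact h01 this

end Window

/-! ### The tree-based construction -/

section Constr

variable {A I : Type} (r : I) (p : I → I) (d0 : I) (a0 a1 : A)

/-- swap function: `gswap a ≠ a` when `a0 ≠ a1`. -/
noncomputable def gswap (a : A) : A := by
  classical exact if a = a0 then a1 else a0

lemma gswap_ne (h01 : a0 ≠ a1) (a : A) : gswap a0 a1 a ≠ a := by
  unfold gswap
  split_ifs with h
  · rw [h]; exact h01.symm
  · exact fun hc => h hc.symm

/-- `d` has a child w.r.t. the parent map `p`. -/
def hasChild (d : I) : Prop := ∃ e, p e = d ∧ e ≠ d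

/-- the flag of `d` is set and `d` has a child. -/
def beta (x : I → A × Bool) (d : I) : Prop := (x d).2 = true ∧ hasChild p d

/-- `i` deviates: its flag is set, it has a child, and all its children are calm
and agree with it. -/
def dev (x : I → A × Bool) (i : I) : Prop :=
  beta p x i ∧ ∀ e, p e = i → e ≠ i → ¬ beta p x e ∧ (x e).1 = (x i).1

/-- the root sees no witness of non-constancy. -/
def calm (x : I → A × Bool) : Prop :=
  ∀ d, p d = r → d ≠ r → ¬ beta p x d ∧ (x d).1 = (x d0).1

open Classical in
/-- The function generating the non-constant language along a rooted spanning tree. -/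
noncomputable def tf (x : I → A × Bool) (i : I) : A :=
  if i = r then
    (if calm r p d0 x then
      (if (x r).1 ≠ (x d0).1 then (x r).1 else gswap a0 a1 (x d0).1)
    else (x r).1)
  else (if dev p x i then gswap a0 a1 (x i).1 else (x i).1)

/-- The determining set of coordinate `i` for `tf`. -/
def Wset (i : I) : Set I := {i} ∪ {e | p e = i ∧ e ≠ i}

lemma beta_congr {x y : I → A × Bool} {d : I} (h : x d = y d) :
    beta p x d ↔ beta p y d := by unfold beta; rw [h]

lemma tf_determines (hr : p r = r) (hd0 : p d0 = r ∧ d0 ≠ r) (i : I) :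
    Determines (tf r p d0 a0 a1) i (Wset p i) := by
  intro x y h
  have hxi : x i = y i := h i (Or.inl rfl)
  have hch : ∀ e, p e = i → e ≠ i → x e = y e := fun e he hne => h e (Or.inr ⟨he, hne⟩)
  by_cases hir : i = r
  · subst hir
    have hd0' : x d0 = y d0 := hch d0 hd0.1 hd0.2
    have hcalm : calm i p d0 x ↔ calm i p d0 y := by
      unfold calm
      constructor
      · intro hc d hd hdr
        obtain ⟨h1, h2⟩ := hc d hd hdr
        exact ⟨fun hb => h1 ((beta_congr p (hch d hd hdr)).mpr hb),
          by rw [← hch d hd hdr, ← hd0']; exact h2⟩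
      · intro hc d hd hdr
        obtain ⟨h1, h2⟩ := hc d hd hdr
        exact ⟨fun hb => h1 ((beta_congr p (hch d hd hdr)).mp hb),
          by rw [hch d hd hdr, hd0']; exact h2⟩
    unfold tf
    rw [if_pos rfl, if_pos rfl, hxi, hd0']
    by_cases hc : calm i p d0 y
    · rw [if_pos (hcalm.mpr hc), if_pos hc]
    · rw [if_neg (fun hh => hc (hcalm.mp hh)), if_neg hc]
  · have hdev : dev p x i ↔ dev p y i := by
      unfold dev
      constructor
      · rintro ⟨h1, h2⟩
        refine ⟨(beta_congr p hxi).mp h1, fun e he hne => ?_⟩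
        obtain ⟨h3, h4⟩ := h2 e he hne
        rw [beta_congr p (hch e he hne)] at h3
        rw [hch e he hne, hxi] at h4
        exact ⟨h3, h4⟩
      · rintro ⟨h1, h2⟩
        refine ⟨(beta_congr p hxi).mpr h1, fun e he hne => ?_⟩
        obtain ⟨h3, h4⟩ := h2 e he hne
        rw [← beta_congr p (hch e he hne)] at h3
        rw [← hch e he hne, ← hxi] at h4
        exact ⟨h3, h4⟩
    unfold tf
    rw [if_neg hir, if_neg hir, hxi]
    by_cases hd : dev p y i
    · rw [if_pos (hdev.mpr hd), if_pos hd]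
    · rw [if_neg (fun hh => hd (hdev.mp hh)), if_neg hd]

lemma tf_comm (hr : p r = r) (hd0 : p d0 = r ∧ d0 ≠ r) :
    commComplex (tf r p d0 a0 a1) ⊆
      {S : Set I | S = ∅ ∨ (∃ i, S = {i}) ∨ ∃ i, i ≠ r ∧ S = ({i, p i} : Set I)} := by
  intro S hS
  obtain ⟨k, hk⟩ := hS
  have hw : ∀ i ∈ S, k ∈ Wset p i := by
    intro i hi
    have : k ∈ window (tf r p d0 a0 a1) i := by
      simp only [Set.mem_iInter] at hk
      exact hk i hi
    exact window_subset (tf_determines r p d0 a0 a1 hr hd0 i) this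
  rcases S.eq_empty_or_nonempty with rfl | ⟨i, hi⟩
  · exact Or.inl rfl
  by_cases hS1 : S = {i}
  · exact Or.inr (Or.inl ⟨i, hS1⟩)
  · have : ∃ j ∈ S, j ≠ i := by
      by_contra hc
      push_neg at hc
      apply hS1
      ext l
      exact ⟨fun hl => hc l hl, fun hl => by rw [Set.mem_singleton_iff] at hl; rw [hl]; exact hi⟩
    obtain ⟨j, hj, hji⟩ := this
    have pair : ∀ a b, a ∈ S → b ∈ S → a ≠ b →
        (k = a ∧ p a = b) ∨ (k = b ∧ p b = a) := by
      intro a b ha hb hab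
      rcases hw a ha with hka | ⟨hpa, hknea⟩
      · rcases hw b hb with hkb | ⟨hpb, hkneb⟩
        · exact absurd (hka.symm.trans hkb) hab
        · rw [Set.mem_singleton_iff] at hka
          subst hka
          exact Or.inl ⟨rfl, hpb⟩
      · rcases hw b hb with hkb | ⟨hpb, hkneb⟩
        · rw [Set.mem_singleton_iff] at hkb
          subst hkb
          exact Or.inr ⟨rfl, hpa⟩
        · exact absurd (hpa.symm.trans hpb) hab
    -- wlog: k = i ∧ p i = j, or k = j ∧ p j = i
    rcases pair i j hi hj (Ne.symm hji) with ⟨hki, hpij⟩ | ⟨hkj, hpji⟩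
    · subst hki
      refine Or.inr (Or.inr ⟨k, ?_, ?_⟩)
      · intro hkr
        rw [hkr, hr] at hpij
        exact hji (hpij.symm.trans hkr.symm) |>.elim
      · rw [hpij]
        ext l
        constructor
        · intro hl
          by_contra hnl
          simp only [Set.mem_insert_iff, Set.mem_singleton_iff, not_or] at hnl
          rcases hw l hl with hkl | ⟨hpl, _⟩
          · exact hnl.1 hkl.symm
          · rw [hpij] at hpl
            exact hnl.2 hpl.symm
        · intro hl
          rcases hl with rfl | hl
          · exact hi
          · rw [Set.mem_singleton_iff] at hl
            rw [hl]; exact hj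
    · subst hkj
      refine Or.inr (Or.inr ⟨k, ?_, ?_⟩)
      · intro hkr
        rw [hkr, hr] at hpji
        exact hji (hkr.trans hpji)
      · rw [hpji]
        ext l
        constructor
        · intro hl
          by_contra hnl
          simp only [Set.mem_insert_iff, Set.mem_singleton_iff, not_or] at hnl
          rcases hw l hl with hkl | ⟨hpl, _⟩
          · exact hnl.1 hkl.symm
          · rw [hpji] at hpl
            exact hnl.2 hpl.symm
        · intro hl
          rcases hl with rfl | hl
          · exact hj
          · rw [Set.mem_singleton_iff] at hl
            rw [hl]; exact hi

lemma reach_aux (ρ : I → ℕ) (hρ : ∀ i, i ≠ r → ρ i = ρ (p i) + 1)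
    (hρ0 : ∀ i, ρ i = 0 → i = r) :
    ∀ (m : ℕ) (i : I), ρ i ≤ m → ∃ n, p^[n] i = r := by
  intro m
  induction m with
  | zero => intro i hi; exact ⟨0, by simpa using hρ0 i (Nat.le_zero.mp hi)⟩
  | succ m ih =>
    intro i hi
    by_cases h : i = r
    · exact ⟨0, by simpa using h⟩
    · have h1 := hρ i h
      obtain ⟨n, hn⟩ := ih (p i) (by omega)
      exact ⟨n + 1, by rw [Function.iterate_succ_apply]; exact hn⟩

lemma reach (ρ : I → ℕ) (hρ : ∀ i, i ≠ r → ρ i = ρ (p i) + 1)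
    (hρ0 : ∀ i, ρ i = 0 → i = r) (i : I) : ∃ n, p^[n] i = r :=
  reach_aux r p ρ hρ hρ0 (ρ i) i le_rfl

lemma exists_child (ρ : I → ℕ) (hρ : ∀ i, i ≠ r → ρ i = ρ (p i) + 1)
    (hρ0 : ∀ i, ρ i = 0 → i = r) (hnt : Nontrivial I) : ∃ d, p d = r ∧ d ≠ r := by
  by_contra hcon
  push_neg at hcon
  have key : ∀ (n : ℕ) (i : I), p^[n] i = r → i = r := by
    intro n
    induction n with
    | zero => exact fun i hi => hi
    | succ n ih =>
      intro i hi
      rw [Function.iterate_succ_apply'] at hi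
      exact ih i (hcon _ hi)
  obtain ⟨i, hi⟩ := exists_ne r
  obtain ⟨n, hn⟩ := reach r p ρ hρ hρ0 i
  exact hi (key n i hn)

lemma subtree_child : ∀ (n : ℕ) (j i : I), p^[n] j = i → j ≠ i →
    ∃ e, p e = i ∧ e ≠ i ∧ ∃ m, p^[m] j = e := by
  intro n
  induction n with
  | zero => intro j i h hne; exact absurd h hne
  | succ n ih =>
    intro j i h hne
    rw [Function.iterate_succ_apply] at h
    by_cases hpj : p j = i
    · exact ⟨j, hpj, hne, 0, rfl⟩
    · obtain ⟨e, he1, he2, m, hm⟩ := ih (p j) i h hpj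
      exact ⟨e, he1, he2, m + 1, by rw [Function.iterate_succ_apply]; exact hm⟩

lemma tf_nonconst [Finite I] (hr : p r = r) (ρ : I → ℕ)
    (hρ : ∀ i, i ≠ r → ρ i = ρ (p i) + 1)
    (h01 : a0 ≠ a1) (hd0 : p d0 = r ∧ d0 ≠ r) (x : I → A × Bool) :
    ∃ i j, tf r p d0 a0 a1 x i ≠ tf r p d0 a0 a1 x j := by
  classical
  have tf_ne : ∀ i, i ≠ r → ¬ dev p x i → tf r p d0 a0 a1 x i = (x i).1 := by
    intro i hi hd
    unfold tf
    rw [if_neg hi, if_neg hd]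
  by_cases hdev : ∃ i, i ≠ r ∧ dev p x i
  · obtain ⟨i, hi, hdi⟩ := hdev
    obtain ⟨e, he, hei⟩ := hdi.1.2
    have her : e ≠ r := by
      intro h
      rw [h, hr] at he
      exact hi he.symm
    obtain ⟨hbe, hve⟩ := hdi.2 e he hei
    have h1 : tf r p d0 a0 a1 x i = gswap a0 a1 (x i).1 := by
      unfold tf
      rw [if_neg hi, if_pos hdi]
    have h2 : tf r p d0 a0 a1 x e = (x e).1 := tf_ne e her (fun hde => hbe hde.1)
    exact ⟨i, e, by rw [h1, h2, hve]; exact gswap_ne a0 a1 h01 _⟩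
  · push_neg at hdev
    by_cases hc : calm r p d0 x
    · have hroot : tf r p d0 a0 a1 x r =
          if (x r).1 ≠ (x d0).1 then (x r).1 else gswap a0 a1 (x d0).1 := by
        unfold tf
        rw [if_pos rfl, if_pos hc]
      have hdo : tf r p d0 a0 a1 x d0 = (x d0).1 := tf_ne d0 hd0.2 (hdev d0 hd0.2)
      refine ⟨r, d0, ?_⟩
      rw [hroot, hdo]
      split_ifs with h
      · exact h
      · exact gswap_ne a0 a1 h01 _
    · unfold calm at hc
      push_neg at hc
      obtain ⟨d, hd, hdr, hbad⟩ := hc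
      by_cases hvald : (x d).1 ≠ (x d0).1
      · exact ⟨d, d0, by
          rw [tf_ne d hdr (hdev d hdr), tf_ne d0 hd0.2 (hdev d0 hd0.2)]; exact hvald⟩
      · have hb : beta p x d := by
          by_contra hnb
          exact hvald (hbad hnb)
        set Sset : Set I := {d | d ≠ r ∧ beta p x d} with hSdef
        have hSne : Sset.Nonempty := ⟨d, hdr, hb⟩
        obtain ⟨m, hmS, hmax⟩ := Set.exists_max_image Sset ρ (Set.toFinite _) hSne
        have hnd : ¬ dev p x m := hdev m hmS.1
        unfold dev at hnd
        push_neg at hnd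
        obtain ⟨e, he, hem, hbad2⟩ := hnd hmS.2
        have her : e ≠ r := fun h => hmS.1 (by rw [← he, h, hr])
        have hbe : ¬ beta p x e := by
          intro hbeta
          have hmem : e ∈ Sset := ⟨her, hbeta⟩
          have h1 := hmax e hmem
          have h2 := hρ e her
          rw [he] at h2
          omega
        have hne2 : (x e).1 ≠ (x m).1 := hbad2 hbe
        exact ⟨e, m, by
          rw [tf_ne e her (hdev e her), tf_ne m hmS.1 (hdev m hmS.1)]; exact hne2⟩

lemma tf_surj (hr : p r = r) (ρ : I → ℕ)
    (hρ : ∀ i, i ≠ r → ρ i = ρ (p i) + 1) (hρ0 : ∀ i, ρ i = 0 → i = r)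
    (h01 : a0 ≠ a1) (hd0 : p d0 = r ∧ d0 ≠ r)
    (z : I → A) (hz : ∃ i j, z i ≠ z j) : ∃ x, tf r p d0 a0 a1 x = z := by
  classical
  set x : I → A × Bool :=
    fun i => (z i, if (∃ j, (∃ n, p^[n] j = i) ∧ z j ≠ z i) then true else false) with hx
  have hval : ∀ i, (x i).1 = z i := fun i => rfl
  have hflag : ∀ i, ((x i).2 = true) ↔ (∃ j, (∃ n, p^[n] j = i) ∧ z j ≠ z i) := by
    intro i
    show (if (∃ j, (∃ n, p^[n] j = i) ∧ z j ≠ z i) then true else false) = true ↔ _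
    split_ifs with h
    · exact iff_of_true rfl h
    · exact iff_of_false (by simp) h
  have hconst : ∀ e, ¬ beta p x e → ∀ j, (∃ n, p^[n] j = e) → z j = z e := by
    intro e hnb j hj
    unfold beta at hnb
    rw [not_and_or] at hnb
    rcases hnb with hf | hnc
    · by_contra hne
      exact hf ((hflag e).mpr ⟨j, hj, hne⟩)
    · obtain ⟨n, hn⟩ := hj
      by_cases hjd : j = e
      · rw [hjd]
      · obtain ⟨c, hc1, hc2, _⟩ := subtree_child p n j e hn hjd
        exact absurd ⟨c, hc1, hc2⟩ hnc
  have hnodev : ∀ i, i ≠ r → ¬ dev p x i := by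
    intro i hi hdev
    obtain ⟨hb, hall⟩ := hdev
    obtain ⟨j, hj, hne⟩ := (hflag i).mp hb.1
    have hji : j ≠ i := fun h => hne (by rw [h])
    obtain ⟨n, hn⟩ := hj
    obtain ⟨e, he1, he2, m, hm⟩ := subtree_child p n j i hn hji
    obtain ⟨hnb, hveq⟩ := hall e he1 he2
    rw [hval, hval] at hveq
    exact hne ((hconst e hnb j ⟨m, hm⟩).trans hveq)
  have hout : ∀ i, i ≠ r → tf r p d0 a0 a1 x i = z i := by
    intro i hi
    unfold tf
    rw [if_neg hi, if_neg (hnodev i hi)]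
  have hroot : tf r p d0 a0 a1 x r = z r := by
    unfold tf
    rw [if_pos rfl]
    by_cases hc : calm r p d0 x
    · have hall : ∀ j, j ≠ r → z j = z d0 := by
        intro j hj
        obtain ⟨n, hn⟩ := reach r p ρ hρ hρ0 j
        obtain ⟨e, he1, he2, m, hm⟩ := subtree_child p n j r hn hj
        obtain ⟨hnb, hveq⟩ := hc e he1 he2
        rw [hval, hval] at hveq
        rw [hconst e hnb j ⟨m, hm⟩, hveq]
      have hzr : z r ≠ z d0 := by
        intro hzr
        obtain ⟨i1, j1, hne⟩ := hz
        apply hne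
        have hall' : ∀ k, z k = z d0 := by
          intro k
          by_cases hk : k = r
          · rw [hk, hzr]
          · exact hall k hk
        rw [hall' i1, hall' j1]
      rw [if_pos hc, if_pos hzr]
    · rw [if_neg hc]
  exact ⟨x, funext fun i => by
    by_cases hi : i = r
    · rw [hi]; exact hroot
    · exact hout i hi⟩

lemma tf_range [Finite I] (hr : p r = r) (ρ : I → ℕ)
    (hρ : ∀ i, i ≠ r → ρ i = ρ (p i) + 1) (hρ0 : ∀ i, ρ i = 0 → i = r)
    (h01 : a0 ≠ a1) (hd0 : p d0 = r ∧ d0 ≠ r) :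
    Set.range (tf r p d0 a0 a1) = {z : I → A | ∃ i j, z i ≠ z j} := by
  ext z
  constructor
  · rintro ⟨x, rfl⟩
    exact tf_nonconst r p d0 a0 a1 hr ρ hρ h01 hd0 x
  · intro hz
    exact tf_surj r p d0 a0 a1 hr ρ hρ hρ0 h01 hd0 z hz

end Constr

/-! ### Graph lemmas -/

lemma gen_connected {A I : Type} [Finite A] [Finite I] (hA : 2 ≤ Nat.card A)
    (hI : 2 ≤ Nat.card I) (K : Set (Set I))
    (hgen : Generates K {x : I → A | ∃ i j, x i ≠ x j}) :
    ConnectedComplex K := by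
  classical
  obtain ⟨B, J, hB, hJ, hJne, f, hrange, hcomm⟩ := hgen
  haveI := hB; haveI := hJ; haveI := hJne
  rintro ⟨I0, hne, hnuniv, hsplit⟩
  have hAnt : Nontrivial A := Finite.one_lt_card_iff_nontrivial.mp (by omega)
  obtain ⟨a0, a1, h01⟩ := exists_pair_ne A
  obtain ⟨i1, hi1⟩ := Set.nonempty_iff_ne_empty.mpr hne
  obtain ⟨i2, hi2⟩ : ∃ i, i ∉ I0 := by
    by_contra h
    push_neg at h
    exact hnuniv (Set.eq_univ_of_forall h)
  have hzab : (fun i => if i ∈ I0 then a0 else a1) ∈ {x : I → A | ∃ i j, x i ≠ x j} :=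
    ⟨i1, i2, by simp [hi1, hi2, h01]⟩
  have hzba : (fun i => if i ∈ I0 then a1 else a0) ∈ {x : I → A | ∃ i j, x i ≠ x j} :=
    ⟨i1, i2, by simp [hi1, hi2, h01.symm]⟩
  rw [← hrange] at hzab hzba
  obtain ⟨u, hu⟩ := hzab
  obtain ⟨v, hv⟩ := hzba
  set J0 : Set J := ⋃ i ∈ I0, window f i with hJ0
  have hdisj : ∀ i, i ∈ I0 → ∀ i', i' ∉ I0 → ∀ j, j ∈ window f i → j ∈ window f i' → False := by
    intro i hi i' hi' j hj hj'
    have hii' : i ≠ i' := fun h => hi' (h ▸ hi)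
    have hpair : ({i, i'} : Set I) ∉ K := by
      intro hmem
      rcases hsplit _ hmem with hsub | hsub
      · exact hi' (hsub (Set.mem_insert_iff.mpr (Or.inr rfl)))
      · exact (hsub (Set.mem_insert _ _)) hi
    apply hpair
    apply hcomm
    refine ⟨j, ?_⟩
    simp only [Set.mem_iInter]
    intro k hk
    simp only [Set.mem_insert_iff, Set.mem_singleton_iff] at hk
    rcases hk with rfl | rfl
    exacts [hj, hj']
  set w : J → B := fun j => if j ∈ J0 then u j else v j with hw
  have hconst : ∀ i, f w i = a0 := by
    intro i
    by_cases hi : i ∈ I0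
    · have heq : f w i = f u i := by
        apply window_determines f i
        intro j hj
        have hjJ0 : j ∈ J0 := Set.mem_biUnion hi hj
        simp [hw, hjJ0]
      rw [heq, hu]
      simp [hi]
    · have heq : f w i = f v i := by
        apply window_determines f i
        intro j hj
        have hjJ0 : j ∉ J0 := by
          intro hj0
          rw [hJ0] at hj0
          obtain ⟨i'', hi'', hji''⟩ := Set.mem_iUnion₂.mp hj0
          exact hdisj i'' hi'' i hi j hji'' hj
        simp [hw, hjJ0]
      rw [heq, hv]
      simp [hi]
  have hmem : f w ∈ {x : I → A | ∃ i j, x i ≠ x j} := hrange ▸ Set.mem_range_self w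
  obtain ⟨i, j, hij⟩ := hmem
  exact hij (by rw [hconst i, hconst j])

lemma skel_connected {I : Type} (K : Set (Set I)) (hK : IsComplex K)
    (hcon : ConnectedComplex K) (hne : Nonempty I) : (skeletonGraph K).Connected := by
  rw [SimpleGraph.connected_iff]
  refine ⟨?_, hne⟩
  intro u v
  by_contra hv
  apply hcon
  refine ⟨{j | (skeletonGraph K).Reachable u j}, ?_, ?_, ?_⟩
  · exact Set.nonempty_iff_ne_empty.mp ⟨u, SimpleGraph.Reachable.refl u⟩
  · intro h
    exact hv (Set.eq_univ_iff_forall.mp h v)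
  · intro S hS
    by_contra hsplit
    push_neg at hsplit
    obtain ⟨h1, h2⟩ := hsplit
    rw [Set.not_subset] at h1 h2
    obtain ⟨b, hbS, hb⟩ := h1
    obtain ⟨a, haS, ha⟩ := h2
    rw [Set.mem_compl_iff, not_not] at ha
    have hab : a ≠ b := fun h => hb (h ▸ ha)
    have hpair : ({a, b} : Set I) ∈ K := by
      apply hK S hS
      intro l hl
      simp only [Set.mem_insert_iff, Set.mem_singleton_iff] at hl
      rcases hl with rfl | rfl
      exacts [haS, hbS]
    have hadj : (skeletonGraph K).Adj a b := by
      rw [skeletonGraph, SimpleGraph.fromRel_adj]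
      exact ⟨hab, Or.inl hpair⟩
    exact hb (Set.mem_setOf_eq ▸ (ha.trans hadj.reachable))

lemma exists_parent {I : Type} (G : SimpleGraph I) (hG : G.Connected) :
    ∃ (r : I) (p : I → I) (ρ : I → ℕ), p r = r ∧
      (∀ i, i ≠ r → G.Adj i (p i) ∧ ρ i = ρ (p i) + 1) ∧ (∀ i, ρ i = 0 → i = r) := by
  classical
  have hne : Nonempty I := hG.nonempty
  obtain ⟨r⟩ := hne
  have key : ∀ i, i ≠ r → ∃ j, G.Adj i j ∧ G.dist r i = G.dist r j + 1 := by
    intro i hi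
    obtain ⟨wlk, hw⟩ := hG.exists_walk_length_eq_dist i r
    cases wlk with
    | nil => exact absurd rfl hi
    | @cons _ c _ hadj q =>
      refine ⟨c, hadj, ?_⟩
      have hlen : q.length + 1 = G.dist i r := by simpa using hw
      have h1 : G.dist r c ≤ q.length := by
        have := SimpleGraph.dist_le q.reverse
        simpa [SimpleGraph.dist_comm] using this
      have h2 : G.dist r i ≤ G.dist r c + 1 := by
        have htri := hG.dist_triangle (u := r) (v := c) (w := i)
        have hci : G.dist c i ≤ 1 := by
          have := SimpleGraph.dist_le hadj.symm.toWalk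
          simpa using this
        omega
      have h3 : G.dist r i = G.dist i r := SimpleGraph.dist_comm
      omega
  refine ⟨r, fun i => if h : i = r then r else (key i h).choose, fun i => G.dist r i,
    by simp, ?_, ?_⟩
  · intro i hi
    simp only [dif_neg hi]
    exact ⟨(key i hi).choose_spec.1, (key i hi).choose_spec.2⟩
  · intro i hi
    exact (hG.dist_eq_zero_iff.mp hi).symm

lemma parentGraph_isTree {I : Type} [Finite I] (r : I) (p : I → I) (ρ : I → ℕ)
    (hr : p r = r) (hρ : ∀ i, i ≠ r → ρ i = ρ (p i) + 1) (hρ0 : ∀ i, ρ i = 0 → i = r) :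
    (SimpleGraph.fromRel fun i j => i ≠ r ∧ p i = j).IsTree := by
  set G := SimpleGraph.fromRel fun i j => i ≠ r ∧ p i = j with hGdef
  have hadjp : ∀ i, i ≠ r → G.Adj i (p i) := by
    intro i hi
    rw [hGdef, SimpleGraph.fromRel_adj]
    refine ⟨fun h => ?_, Or.inl ⟨hi, rfl⟩⟩
    have := hρ i hi
    rw [← h] at this
    omega
  have hreach : ∀ i, G.Reachable i r := by
    intro i
    have haux : ∀ (m : ℕ) (i : I), ρ i ≤ m → G.Reachable i r := by
      intro m
      induction m with
      | zero =>
        intro i hi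
        rw [hρ0 i (Nat.le_zero.mp hi)]
      | succ m ih =>
        intro i hi
        by_cases h : i = r
        · rw [h]
        · have h1 := hρ i h
          exact (hadjp i h).reachable.trans (ih (p i) (by omega))
    exact haux (ρ i) i le_rfl
  constructor
  · rw [SimpleGraph.connected_iff]
    exact ⟨fun u v => (hreach u).trans (hreach v).symm, ⟨r⟩⟩
  · rw [SimpleGraph.isAcyclic_iff_forall_adj_isBridge]
    suffices hbr : ∀ v, v ≠ r → G.IsBridge s(v, p v) by
      intro v w hadj
      rw [hGdef, SimpleGraph.fromRel_adj] at hadj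
      obtain ⟨hvw, hor | hor⟩ := hadj
      · have := hbr v hor.1
        rwa [hor.2] at this
      · have := hbr w hor.1
        rw [hor.2] at this
        rwa [Sym2.eq_swap] at this
    intro v hv
    rw [SimpleGraph.isBridge_iff]
    set T : Set I := {j | ∃ n, p^[n] j = v} with hTdef
    have hTv : v ∈ T := ⟨0, rfl⟩
    have hTp : p v ∉ T := by
      rintro ⟨n, hn⟩
      have hcyc : p^[n + 1] v = v := by
        rw [Function.iterate_succ_apply]
        exact hn
      obtain ⟨m, hm⟩ := reach r p ρ hρ hρ0 v
      have hmul : ∀ t, p^[(n + 1) * t] v = v := by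
        intro t
        induction t with
        | zero => simp
        | succ t ih =>
          rw [Nat.mul_succ, Function.iterate_add_apply, hcyc, ih]
      have hfix : ∀ k, p^[k] r = r := fun k => Function.iterate_fixed hr k
      have hge : m ≤ (n + 1) * m := Nat.le_mul_of_pos_left m (Nat.succ_pos n)
      have hvr : v = r := by
        have h1 := hmul m
        rw [← Nat.sub_add_cancel hge, Function.iterate_add_apply, hm, hfix] at h1
        exact h1.symm
      exact hv hvr
    have hclose1 : ∀ a, a ∈ T → a ≠ v → p a ∈ T := by
      rintro a ⟨n, hn⟩ hav
      cases n with
      | zero => exact absurd hn hav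
      | succ n =>
        rw [Function.iterate_succ_apply] at hn
        exact ⟨n, hn⟩
    have hclose2 : ∀ b, p b ∈ T → b ∈ T := by
      rintro b ⟨n, hn⟩
      exact ⟨n + 1, by rw [Function.iterate_succ_apply]; exact hn⟩
    have hstep : ∀ a b, (G \ SimpleGraph.fromEdgeSet {s(v, p v)}).Adj a b → (a ∈ T ↔ b ∈ T) := by
      intro a b hab
      rw [SimpleGraph.sdiff_adj, SimpleGraph.fromEdgeSet_adj] at hab
      obtain ⟨hGab, hnadj⟩ := hab
      have hene : s(a, b) ≠ s(v, p v) := by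
        intro h
        exact hnadj ⟨Set.mem_singleton_iff.mpr h, hGab.ne⟩
      rw [hGdef, SimpleGraph.fromRel_adj] at hGab
      obtain ⟨hab', hor | hor⟩ := hGab
      · constructor
        · intro ha
          by_cases hav : a = v
          · exact absurd (by rw [hav, ← hor.2, hav]) hene
          · exact hor.2 ▸ hclose1 a ha hav
        · intro hb
          exact hclose2 a (hor.2.symm ▸ hb)
      · constructor
        · intro ha
          exact hclose2 b (hor.2.symm ▸ ha)
        · intro hb
          by_cases hbv : b = v
          · exact absurd (by rw [hbv, ← hor.2, hbv, Sym2.eq_swap]) hene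
          · exact hor.2 ▸ hclose1 b hb hbv
    intro hreach'
    obtain ⟨wlk⟩ := hreach'
    have haux : ∀ {a b : I} (w' : (G \ SimpleGraph.fromEdgeSet {s(v, p v)}).Walk a b),
        a ∈ T ↔ b ∈ T := by
      intro a b w'
      induction w' with
      | nil => exact Iff.rfl
      | cons h q ih => exact (hstep _ _ h).trans ih
    exact hTp ((haux wlk).mp hTv)

lemma gen_of_parent {A I : Type} [Finite A] [Finite I] (hA : 2 ≤ Nat.card A)
    (hI : 2 ≤ Nat.card I) (K : Set (Set I)) (r : I) (p : I → I) (ρ : I → ℕ)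
    (hr : p r = r) (hρ : ∀ i, i ≠ r → ρ i = ρ (p i) + 1) (hρ0 : ∀ i, ρ i = 0 → i = r)
    (hempty : ∅ ∈ K) (hsingle : ∀ i, ({i} : Set I) ∈ K)
    (hedge : ∀ i, i ≠ r → ({i, p i} : Set I) ∈ K) :
    Generates K {x : I → A | ∃ i j, x i ≠ x j} := by
  have hAnt : Nontrivial A := Finite.one_lt_card_iff_nontrivial.mp (by omega)
  have hInt : Nontrivial I := Finite.one_lt_card_iff_nontrivial.mp (by omega)
  obtain ⟨a0, a1, h01⟩ := exists_pair_ne A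
  obtain ⟨d0, hd01, hd02⟩ := exists_child r p ρ hρ hρ0 hInt
  refine ⟨A × Bool, I, inferInstance, inferInstance, ⟨r⟩, tf r p d0 a0 a1, ?_, ?_⟩
  · exact tf_range r p d0 a0 a1 hr ρ hρ hρ0 h01 ⟨hd01, hd02⟩
  · intro S hS
    rcases tf_comm r p d0 a0 a1 hr ⟨hd01, hd02⟩ hS with rfl | ⟨i, rfl⟩ | ⟨i, hi, rfl⟩
    exacts [hempty, hsingle i, hedge i hi]

lemma sub_tree_eq {A I : Type} [Finite A] [Finite I] (hA : 2 ≤ Nat.card A)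
    (hI : 2 ≤ Nat.card I) (G : SimpleGraph I) (hG : G.IsTree) (K' : Set (Set I))
    (hsub : K' ⊆ treeComplex G)
    (hgen : Generates K' {x : I → A | ∃ i j, x i ≠ x j}) : K' = treeComplex G := by
  classical
  have hcon : ConnectedComplex K' := gen_connected hA hI K' hgen
  obtain ⟨B, J, hB, hJ, hJne, f, hrange, hcomm⟩ := hgen
  haveI := hB; haveI := hJ; haveI := hJne
  have hempty : (∅ : Set I) ∈ K' := by
    apply hcomm
    exact ⟨Classical.arbitrary J, by simp⟩
  have hsingle : ∀ i, ({i} : Set I) ∈ K' := by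
    intro i
    apply hcomm
    obtain ⟨j, hj⟩ := window_nonempty hA hI f hrange i
    exact ⟨j, by simp [hj]⟩
  have hedge : ∀ a b, G.Adj a b → ({a, b} : Set I) ∈ K' := by
    intro a b hab
    by_contra hmem
    apply hcon
    refine ⟨{k | (G \ SimpleGraph.fromEdgeSet {s(a, b)}).Reachable a k}, ?_, ?_, ?_⟩
    · exact Set.nonempty_iff_ne_empty.mp ⟨a, SimpleGraph.Reachable.refl a⟩
    · intro h
      have hb : (G \ SimpleGraph.fromEdgeSet {s(a, b)}).Reachable a b :=
        Set.eq_univ_iff_forall.mp h b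
      have hbridge := (SimpleGraph.isAcyclic_iff_forall_adj_isBridge.mp hG.IsAcyclic) hab
      rw [SimpleGraph.isBridge_iff] at hbridge
      exact hbridge hb
    · intro S hS
      rcases hsub hS with rfl | ⟨i, rfl⟩ | ⟨c, d, hcd, rfl⟩
      · exact Or.inl (Set.empty_subset _)
      · by_cases hi : i ∈ {k | (G \ SimpleGraph.fromEdgeSet {s(a, b)}).Reachable a k}
        · exact Or.inl (Set.singleton_subset_iff.mpr hi)
        · exact Or.inr (Set.singleton_subset_iff.mpr hi)
      · have hene : s(c, d) ≠ s(a, b) := by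
          intro h
          apply hmem
          have hset : ({c, d} : Set I) = {a, b} := by
            rw [Sym2.eq_iff] at h
            rcases h with ⟨rfl, rfl⟩ | ⟨rfl, rfl⟩
            · rfl
            · exact Set.pair_comm c d
          rw [← hset]
          exact hS
        have hadj' : (G \ SimpleGraph.fromEdgeSet {s(a, b)}).Adj c d := by
          rw [SimpleGraph.sdiff_adj, SimpleGraph.fromEdgeSet_adj]
          exact ⟨hcd, fun hcc => hene hcc.1⟩
        by_cases hc : c ∈ {k | (G \ SimpleGraph.fromEdgeSet {s(a, b)}).Reachable a k}
        · refine Or.inl ?_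
          intro l hl
          simp only [Set.mem_insert_iff, Set.mem_singleton_iff] at hl
          rcases hl with rfl | rfl
          · exact hc
          · exact hc.trans hadj'.reachable
        · refine Or.inr ?_
          intro l hl
          simp only [Set.mem_insert_iff, Set.mem_singleton_iff] at hl
          rcases hl with rfl | rfl
          · exact hc
          · intro hd
            exact hc (SimpleGraph.Reachable.trans hd hadj'.symm.reachable)
  apply Set.Subset.antisymm hsub
  rintro S (rfl | ⟨i, rfl⟩ | ⟨c, d, hcd, rfl⟩)
  exacts [hempty, hsingle i, hedge c d hcd]


theorem stmt15 {A I : Type} [Finite A] [Finite I] (hA : 2 ≤ Nat.card A)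
    (hI : 2 ≤ Nat.card I) (K : Set (Set I)) (hK : IsComplex K) :
    (Generates K {x : I → A | ∃ i j, x i ≠ x j} ↔ ConnectedComplex K) ∧
    ((Generates K {x : I → A | ∃ i j, x i ≠ x j} ∧
        ∀ K' ⊆ K, Generates K' {x : I → A | ∃ i j, x i ≠ x j} → K' = K) ↔
      ∃ G : SimpleGraph I, G.IsTree ∧ K = treeComplex G) := by
  have hInt : Nontrivial I := Finite.one_lt_card_iff_nontrivial.mp (by omega)
  constructor
  · constructor
    · exact gen_connected hA hI K
    · intro hcon
      have hskel := skel_connected K hK hcon inferInstance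
      obtain ⟨r, p, ρ, hr, hpar, hρ0⟩ := exists_parent _ hskel
      have hρ : ∀ i, i ≠ r → ρ i = ρ (p i) + 1 := fun i hi => (hpar i hi).2
      have hedgeK : ∀ i, i ≠ r → ({i, p i} : Set I) ∈ K := by
        intro i hi
        have hadj := (hpar i hi).1
        rw [skeletonGraph, SimpleGraph.fromRel_adj] at hadj
        rcases hadj.2 with h | h
        · exact h
        · rwa [Set.pair_comm]
      obtain ⟨d0, hd01, hd02⟩ := exists_child r p ρ hρ hρ0 hInt
      have hKne : ({d0, p d0} : Set I) ∈ K := hedgeK d0 hd02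
      have hempty : (∅ : Set I) ∈ K := hK _ hKne ∅ (Set.empty_subset _)
      have hsingle : ∀ i, ({i} : Set I) ∈ K := by
        intro i
        by_cases hi : i = r
        · apply hK _ hKne
          intro l hl
          rw [Set.mem_singleton_iff] at hl
          rw [hl, hi, ← hd01]
          exact Set.mem_insert_iff.mpr (Or.inr rfl)
        · apply hK _ (hedgeK i hi)
          intro l hl
          rw [Set.mem_singleton_iff] at hl
          rw [hl]
          exact Set.mem_insert _ _
      exact gen_of_parent hA hI K r p ρ hr hρ hρ0 hempty hsingle hedgeK
  · constructor
    · rintro ⟨hgen, hmin⟩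
      have hcon := gen_connected hA hI K hgen
      have hskel := skel_connected K hK hcon inferInstance
      obtain ⟨r, p, ρ, hr, hpar, hρ0⟩ := exists_parent _ hskel
      have hρ : ∀ i, i ≠ r → ρ i = ρ (p i) + 1 := fun i hi => (hpar i hi).2
      have hedgeK : ∀ i, i ≠ r → ({i, p i} : Set I) ∈ K := by
        intro i hi
        have hadj := (hpar i hi).1
        rw [skeletonGraph, SimpleGraph.fromRel_adj] at hadj
        rcases hadj.2 with h | h
        · exact h
        · rwa [Set.pair_comm]
      obtain ⟨d0, hd01, hd02⟩ := exists_child r p ρ hρ hρ0 hInt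
      have hKne : ({d0, p d0} : Set I) ∈ K := hedgeK d0 hd02
      have hempty : (∅ : Set I) ∈ K := hK _ hKne ∅ (Set.empty_subset _)
      have hsingle : ∀ i, ({i} : Set I) ∈ K := by
        intro i
        by_cases hi : i = r
        · apply hK _ hKne
          intro l hl
          rw [Set.mem_singleton_iff] at hl
          rw [hl, hi, ← hd01]
          exact Set.mem_insert_iff.mpr (Or.inr rfl)
        · apply hK _ (hedgeK i hi)
          intro l hl
          rw [Set.mem_singleton_iff] at hl
          rw [hl]
          exact Set.mem_insert _ _
      set G : SimpleGraph I := SimpleGraph.fromRel fun i j => i ≠ r ∧ p i = j with hGdef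
      have htree : G.IsTree := by
        rw [hGdef]
        exact parentGraph_isTree r p ρ hr hρ hρ0
      have hGadj : ∀ i, i ≠ r → G.Adj i (p i) := by
        intro i hi
        rw [hGdef, SimpleGraph.fromRel_adj]
        refine ⟨fun h => ?_, Or.inl ⟨hi, rfl⟩⟩
        have := hρ i hi
        rw [← h] at this
        omega
      have htsub : treeComplex G ⊆ K := by
        rintro S (rfl | ⟨i, rfl⟩ | ⟨c, d, hcd, rfl⟩)
        · exact hempty
        · exact hsingle i
        · rw [hGdef, SimpleGraph.fromRel_adj] at hcd
          rcases hcd.2 with h | h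
          · rw [← h.2]
            exact hedgeK c h.1
          · rw [← h.2, Set.pair_comm]
            exact hedgeK d h.1
      have hgen' : Generates (treeComplex G) {x : I → A | ∃ i j, x i ≠ x j} := by
        apply gen_of_parent hA hI _ r p ρ hr hρ hρ0
        · exact Or.inl rfl
        · exact fun i => Or.inr (Or.inl ⟨i, rfl⟩)
        · exact fun i hi => Or.inr (Or.inr ⟨i, p i, hGadj i hi, rfl⟩)
      exact ⟨G, htree, (hmin _ htsub hgen').symm⟩
    · rintro ⟨G, hG, rfl⟩
      obtain ⟨r, p, ρ, hr, hpar, hρ0⟩ := exists_parent G hG.isConnected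
      have hρ : ∀ i, i ≠ r → ρ i = ρ (p i) + 1 := fun i hi => (hpar i hi).2
      have hgen : Generates (treeComplex G) {x : I → A | ∃ i j, x i ≠ x j} := by
        apply gen_of_parent hA hI _ r p ρ hr hρ hρ0
        · exact Or.inl rfl
        · exact fun i => Or.inr (Or.inl ⟨i, rfl⟩)
        · exact fun i hi => Or.inr (Or.inr ⟨i, p i, (hpar i hi).1, rfl⟩)
      exact ⟨hgen, fun K' hsub hgen' => sub_tree_eq hA hI G hG K' hsub hgen'⟩
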